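/- Let 0<q<1 and define for real ν the bilateral sum Q_ν = (1-q)·Σ_{m=-∞}^∞ 1/(q^{m-ν+1/2} + q^{-m+ν-1/2}). Then Q_ν converges for every ν, and lim_{q→1⁻} Q_ν = π/2. -/

import Mathlib

open Filter

section QAux
open Real

noncomputable def fK (x : ℝ) : ℝ := 1 / (Real.exp x + Real.exp (-x))
noncomputable def FK (x : ℝ) : ℝ := Real.arctan (Real.exp x)

lemma fK_pos (x : ℝ) : 0 < fK x := by
  unfold fK; positivity

lemma fK_le_half (x : ℝ) : fK x ≤ 1 / 2 := by
  unfold fK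
  have h := Real.add_one_le_exp x
  have h2 := Real.add_one_le_exp (-x)
  have := Real.exp_pos x
  have := Real.exp_pos (-x)
  rw [div_le_div_iff₀ (by positivity) (by norm_num)]
  nlinarith

lemma fK_even (x : ℝ) : fK (-x) = fK x := by
  unfold fK; rw [neg_neg, add_comm]

lemma fK_anti {x y : ℝ} (hx : 0 ≤ x) (hxy : x ≤ y) : fK y ≤ fK x := by
  unfold fK
  have e1 : Real.exp x ≤ Real.exp y := Real.exp_le_exp.2 hxy
  have e2 : Real.exp (-y) ≤ Real.exp (-x) := Real.exp_le_exp.2 (by linarith)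
  have p1 := Real.exp_pos x
  have p2 := Real.exp_pos (-x)
  have p3 := Real.exp_pos y
  have p4 := Real.exp_pos (-y)
  have key : Real.exp x + Real.exp (-x) ≤ Real.exp y + Real.exp (-y) := by
    have m1 : Real.exp x * Real.exp (-x) = 1 := by rw [← Real.exp_add]; simp
    have m2 : Real.exp y * Real.exp (-y) = 1 := by rw [← Real.exp_add]; simp
    have l1 : Real.exp (-x) ≤ 1 := Real.exp_le_one_iff.2 (by linarith)
    have l2 : Real.exp (-y) ≤ 1 := Real.exp_le_one_iff.2 (by linarith)
    nlinarith [mul_nonneg (sub_nonneg.2 e1) (sub_nonneg.2 (mul_le_one₀ l1 p4.le l2))]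
  exact one_div_le_one_div_of_le (by positivity) key

lemma hasDerivAt_FK (x : ℝ) : HasDerivAt FK (fK x) x := by
  have h1 : HasDerivAt Real.exp (Real.exp x) x := Real.hasDerivAt_exp x
  have h2 : HasDerivAt Real.arctan (1 / (1 + Real.exp x ^ 2)) (Real.exp x) :=
    Real.hasDerivAt_arctan (Real.exp x)
  have : HasDerivAt FK (1 / (1 + Real.exp x ^ 2) * Real.exp x) x := h2.comp x h1
  convert this using 1
  unfold fK
  rw [div_mul_eq_mul_div, one_mul, div_eq_div_iff (by positivity) (by positivity)]
  have m1 : Real.exp x * Real.exp (-x) = 1 := by rw [← Real.exp_add]; simp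
  linear_combination -m1

lemma FK_mono {x y : ℝ} (h : x ≤ y) : FK x ≤ FK y :=
  Real.arctan_strictMono.monotone (Real.exp_le_exp.2 h)

lemma FK_zero : FK 0 = Real.pi / 4 := by
  unfold FK; rw [Real.exp_zero, Real.arctan_one]

lemma FK_lt (x : ℝ) : FK x < Real.pi / 2 := Real.arctan_lt_pi_div_two _

lemma FK_tendsto_top : Tendsto FK atTop (nhds (Real.pi / 2)) := by
  have := Real.tendsto_arctan_atTop
  exact (tendsto_nhds_of_tendsto_nhdsWithin this).comp Real.tendsto_exp_atTop

lemma FK_step {x y : ℝ} (hx : 0 ≤ x) (hxy : x < y) :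
    fK y * (y - x) ≤ FK y - FK x ∧ FK y - FK x ≤ fK x * (y - x) := by
  obtain ⟨c, hc, hceq⟩ := exists_hasDerivAt_eq_slope FK fK hxy
    ((Real.continuous_arctan.comp Real.continuous_exp).continuousOn)
    (fun z _ => hasDerivAt_FK z)
  have hne : y - x ≠ 0 := sub_ne_zero.2 hxy.ne'
  rw [eq_div_iff hne] at hceq
  have hy : FK y - FK x = fK c * (y - x) := hceq.symm
  have h1 : fK y ≤ fK c := fK_anti (by linarith [hc.1]) hc.2.le
  have h2 : fK c ≤ fK x := fK_anti hx hc.1.le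
  constructor
  · rw [hy]; exact mul_le_mul_of_nonneg_right h1 (by linarith)
  · rw [hy]; exact mul_le_mul_of_nonneg_right h2 (by linarith)

lemma nat_sum (h a : ℝ) (hh : 0 < h) (ha : 0 ≤ a) :
    Summable (fun n : ℕ => fK (a + n * h)) ∧
    Real.pi / 2 - FK a ≤ h * ∑' n : ℕ, fK (a + n * h) ∧
    h * ∑' n : ℕ, fK (a + n * h) ≤ Real.pi / 2 - FK a + h * fK a := by
  have pos : ∀ n : ℕ, 0 ≤ fK (a + n * h) := fun n => (fK_pos _).le
  have hle : ∀ n : ℕ, (0:ℝ) ≤ a + n * h := fun n => by positivity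
  have step_lo : ∀ n : ℕ, FK (a + (n+1 : ℕ) * h) - FK (a + n * h) ≤ h * fK (a + n * h) := by
    intro n
    have := (FK_step (hle n) (x := a + n*h) (y := a + (n+1:ℕ)*h) (by push_cast; nlinarith)).2
    push_cast at this ⊢
    nlinarith
  have step_hi : ∀ n : ℕ, h * fK (a + (n+1 : ℕ) * h) ≤ FK (a + (n+1:ℕ) * h) - FK (a + n * h) := by
    intro n
    have := (FK_step (hle n) (x := a + n*h) (y := a + (n+1:ℕ)*h) (by push_cast; nlinarith)).1
    push_cast at this ⊢
    nlinarith
  have partial_hi : ∀ N : ℕ, h * ∑ n ∈ Finset.range N, fK (a + n * h)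
      ≤ h * fK a + (Real.pi / 2 - FK a) := by
    intro N
    cases N with
    | zero =>
      simp only [Finset.range_zero, Finset.sum_empty, mul_zero]
      have := FK_lt a
      nlinarith [fK_pos a]
    | succ M =>
      rw [Finset.sum_range_succ']
      have tele := Finset.sum_range_sub (fun n => FK (a + n * h)) M
      simp only [Nat.cast_zero, zero_mul, add_zero] at tele
      have hsum : ∑ n ∈ Finset.range M, h * fK (a + (n+1:ℕ) * h)
          ≤ FK (a + M * h) - FK a := by
        rw [← tele]
        exact Finset.sum_le_sum fun n _ => step_hi n
      have hFK := FK_lt (a + M * h)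
      rw [mul_add, Finset.mul_sum]
      simp only [Nat.cast_zero, zero_mul, add_zero]
      push_cast at hsum ⊢
      linarith
  have summ : Summable (fun n : ℕ => fK (a + n * h)) := by
    apply summable_of_sum_range_le pos (c := fK a + (Real.pi / 2 - FK a) / h)
    intro N
    refine (mul_le_mul_iff_right₀ hh).mp ?_
    calc h * ∑ n ∈ Finset.range N, fK (a + n * h)
        ≤ h * fK a + (Real.pi / 2 - FK a) := partial_hi N
      _ = h * (fK a + (Real.pi / 2 - FK a) / h) := by field_simp
  refine ⟨summ, ?_, ?_⟩
  · have partial_lo : ∀ N : ℕ, FK (a + N * h) - FK a ≤ h * ∑ n ∈ Finset.range N, fK (a + n * h) := by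
      intro N
      have tele := Finset.sum_range_sub (fun n => FK (a + n * h)) N
      simp only [Nat.cast_zero, zero_mul, add_zero] at tele
      calc FK (a + N * h) - FK a
          = ∑ n ∈ Finset.range N, (FK (a + (n+1:ℕ) * h) - FK (a + n * h)) := by
            push_cast at tele ⊢; rw [tele]
        _ ≤ ∑ n ∈ Finset.range N, h * fK (a + n * h) := Finset.sum_le_sum fun n _ => step_lo n
        _ = h * ∑ n ∈ Finset.range N, fK (a + n * h) := by rw [Finset.mul_sum]
    have lim1 : Tendsto (fun N : ℕ => FK (a + N * h) - FK a) atTop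
        (nhds (Real.pi / 2 - FK a)) := by
      apply Tendsto.sub_const
      apply FK_tendsto_top.comp
      apply tendsto_atTop_add_const_left
      exact (tendsto_natCast_atTop_atTop).atTop_mul_const hh
    have lim2 : ∀ N : ℕ, FK (a + N * h) - FK a ≤ h * ∑' n : ℕ, fK (a + n * h) := by
      intro N
      calc FK (a + N * h) - FK a ≤ h * ∑ n ∈ Finset.range N, fK (a + n * h) := partial_lo N
        _ ≤ h * ∑' n : ℕ, fK (a + n * h) := by
          apply mul_le_mul_of_nonneg_left _ hh.le
          exact Summable.sum_le_tsum _ (fun n _ => pos n) summ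
    exact le_of_tendsto lim1 (Filter.Eventually.of_forall lim2)
  · have hts := Real.tsum_le_of_sum_range_le pos (c := fK a + (Real.pi / 2 - FK a) / h)
      (fun N => by
        refine (mul_le_mul_iff_right₀ hh).mp ?_
        calc h * ∑ n ∈ Finset.range N, fK (a + n * h)
            ≤ h * fK a + (Real.pi / 2 - FK a) := partial_hi N
          _ = h * (fK a + (Real.pi / 2 - FK a) / h) := by field_simp)
    calc h * ∑' n : ℕ, fK (a + n * h) ≤ h * (fK a + (Real.pi / 2 - FK a) / h) :=
        mul_le_mul_of_nonneg_left hts hh.le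
      _ = Real.pi / 2 - FK a + h * fK a := by field_simp; ring

lemma main_bounds (q c' : ℝ) (hq0 : 0 < q) (hq1 : q < 1) :
    Summable (fun m : ℤ => fK (-Real.log q * ((m : ℝ) - c'))) ∧
    Real.pi - 2 * FK (-Real.log q)
      ≤ -Real.log q * ∑' m : ℤ, fK (-Real.log q * ((m : ℝ) - c')) ∧
    -Real.log q * ∑' m : ℤ, fK (-Real.log q * ((m : ℝ) - c'))
      ≤ Real.pi / 2 + -Real.log q := by
  set h : ℝ := -Real.log q with hdef
  have hh : 0 < h := by
    have := Real.log_neg hq0 hq1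
    simp [hdef]; linarith
  set g : ℤ → ℝ := fun m => fK (h * ((m : ℝ) - c')) with gdef
  set m0 : ℤ := ⌈c'⌉ with m0def
  set d : ℝ := (m0 : ℝ) - c' with ddef
  set e : ℝ := 1 - d with edef
  have hd0 : 0 ≤ d := by simp [ddef, m0def]; exact Int.le_ceil c'
  have hd1 : d ≤ 1 := by
    have := Int.ceil_lt_add_one c'
    simp only [ddef, m0def]; linarith
  have he0 : 0 ≤ e := by simp [edef]; linarith
  have he1 : e ≤ 1 := by simp [edef]; linarith
  have eqnat : ∀ n : ℕ, g ((n : ℤ) + m0) = fK (d * h + n * h) := by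
    intro n
    simp only [gdef]
    congr 1
    push_cast
    simp only [ddef]
    ring
  have eqneg : ∀ n : ℕ, g (-((n : ℤ) + 1) + m0) = fK (e * h + n * h) := by
    intro n
    simp only [gdef]
    rw [show h * (((-((n : ℤ) + 1) + m0 : ℤ) : ℝ) - c') = -(e * h + n * h) by
      push_cast; simp only [edef, ddef]; ring, fK_even]
  obtain ⟨sumd, lod, hid⟩ := nat_sum h (d * h) hh (by positivity)
  obtain ⟨sume, loe, hie⟩ := nat_sum h (e * h) hh (by positivity)
  have sum1 : Summable (fun n : ℤ => g (n + m0)) := by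
    apply Summable.of_nat_of_neg_add_one
    · exact sumd.congr fun n => (eqnat n).symm
    · exact sume.congr fun n => (eqneg n).symm
  have sumg : Summable g := by
    have := (Equiv.addRight m0).summable_iff (f := g)
    apply this.mp
    exact sum1.congr fun n => by simp [Equiv.coe_addRight]
  have tsum_split : ∑' m : ℤ, g m
      = (∑' n : ℕ, fK (d * h + n * h)) + ∑' n : ℕ, fK (e * h + n * h) := by
    rw [← Equiv.tsum_eq (Equiv.addRight m0) g]
    simp only [Equiv.coe_addRight]
    rw [tsum_of_nat_of_neg_add_one (sumd.congr fun n => (eqnat n).symm)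
      (sume.congr fun n => (eqneg n).symm)]
    congr 1
    · exact tsum_congr eqnat
    · exact tsum_congr eqneg
  refine ⟨sumg, ?_, ?_⟩
  · rw [tsum_split, mul_add]
    have b1 : FK (d * h) ≤ FK h := FK_mono (by nlinarith)
    have b2 : FK (e * h) ≤ FK h := FK_mono (by nlinarith)
    refine le_trans ?_ (add_le_add lod loe)
    linarith
  · rw [tsum_split, mul_add]
    have b1 : FK 0 ≤ FK (d * h) := FK_mono (by positivity)
    have b2 : FK 0 ≤ FK (e * h) := FK_mono (by positivity)
    have c1 : fK (d * h) ≤ 1 / 2 := fK_le_half _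
    have c2 : fK (e * h) ≤ 1 / 2 := fK_le_half _
    have := FK_zero
    nlinarith

lemma term_eq (q ν : ℝ) (hq : 0 < q) (m : ℤ) :
    1 / (q ^ ((m : ℝ) - ν + 1 / 2) + q ^ (-(m : ℝ) + ν - 1 / 2))
      = fK (-Real.log q * ((m : ℝ) - (ν - 1/2))) := by
  unfold fK
  rw [Real.rpow_def_of_pos hq, Real.rpow_def_of_pos hq]
  have e1 : Real.log q * ((m : ℝ) - ν + 1/2) = -(-Real.log q * ((m : ℝ) - (ν - 1/2))) := by ring
  have e2 : Real.log q * (-(m : ℝ) + ν - 1/2) = -Real.log q * ((m : ℝ) - (ν - 1/2)) := by ring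
  rw [e1, e2, add_comm (Real.exp _)]

end QAux

theorem stmt18 (ν : ℝ) :
    (∀ q : ℝ, 0 < q → q < 1 →
      Summable fun m : ℤ =>
        1 / (q ^ ((m : ℝ) - ν + 1 / 2) + q ^ (-(m : ℝ) + ν - 1 / 2))) ∧
    Filter.Tendsto
      (fun q : ℝ =>
        (1 - q) * ∑' m : ℤ,
          1 / (q ^ ((m : ℝ) - ν + 1 / 2) + q ^ (-(m : ℝ) + ν - 1 / 2)))
      (nhdsWithin 1 (Set.Ioo (0 : ℝ) 1)) (nhds (Real.pi / 2)) := by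
  constructor
  · intro q hq0 hq1
    exact ((main_bounds q (ν - 1/2) hq0 hq1).1).congr fun m => (term_eq q ν hq0 m).symm
  · set l := nhdsWithin (1 : ℝ) (Set.Ioo (0 : ℝ) 1) with ldef
    have hA : Tendsto (fun q : ℝ => -Real.log q) l (nhds 0) := by
      have h1 : Tendsto (fun q : ℝ => -Real.log q) (nhds 1) (nhds (-Real.log 1)) :=
        ((Real.continuousAt_log one_ne_zero).neg).tendsto
      rw [Real.log_one, neg_zero] at h1
      exact h1.mono_left nhdsWithin_le_nhds
    have hB : Tendsto (fun q : ℝ => (1 - q) / (-Real.log q)) l (nhds 1) := by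
      have hs := hasDerivAt_iff_tendsto_slope.mp (Real.hasDerivAt_log one_ne_zero)
      have hinv := hs.inv₀ (by norm_num)
      rw [show ((1:ℝ)⁻¹)⁻¹ = 1 by norm_num] at hinv
      have hmono : l ≤ nhdsWithin (1 : ℝ) {(1:ℝ)}ᶜ := by
        apply nhdsWithin_mono
        intro x hx
        exact ne_of_lt hx.2
      refine ((hinv.mono_left hmono).congr' ?_)
      filter_upwards [self_mem_nhdsWithin] with q hq
      have hlq : Real.log q < 0 := Real.log_neg hq.1 hq.2
      have hsl : slope Real.log 1 q = Real.log q / (q - 1) := by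
        simp [slope_def_field, Real.log_one]
      rw [hsl, inv_div, show (1 - q : ℝ) = -(q - 1) by ring,
        show -Real.log q = -(Real.log q) from rfl, neg_div_neg_eq]
    have hC : Tendsto (fun q : ℝ => FK (-Real.log q)) l (nhds (Real.pi / 4)) := by
      have hcont : Tendsto FK (nhds 0) (nhds (FK 0)) :=
        ((Real.continuous_arctan.comp Real.continuous_exp).tendsto 0)
      rw [FK_zero] at hcont
      exact hcont.comp hA
    have hL : Tendsto (fun q : ℝ => (1 - q) / (-Real.log q) * (Real.pi - 2 * FK (-Real.log q)))
        l (nhds (Real.pi / 2)) := by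
      have := hB.mul ((tendsto_const_nhds (x := Real.pi)).sub (hC.const_mul 2))
      rw [show (1 : ℝ) * (Real.pi - 2 * (Real.pi / 4)) = Real.pi / 2 by ring] at this
      exact this
    have hU : Tendsto (fun q : ℝ => (1 - q) / (-Real.log q) * (Real.pi / 2 + -Real.log q))
        l (nhds (Real.pi / 2)) := by
      have := hB.mul ((tendsto_const_nhds (x := Real.pi / 2)).add hA)
      rw [show (1 : ℝ) * (Real.pi / 2 + 0) = Real.pi / 2 by ring] at this
      exact this
    apply tendsto_of_tendsto_of_tendsto_of_le_of_le' hL hU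
    · filter_upwards [self_mem_nhdsWithin] with q hq
      obtain ⟨_, lo, _⟩ := main_bounds q (ν - 1/2) hq.1 hq.2
      have hh : 0 < -Real.log q := by
        have := Real.log_neg hq.1 hq.2; linarith
      have Teq : (∑' m : ℤ, 1 / (q ^ ((m : ℝ) - ν + 1 / 2) + q ^ (-(m : ℝ) + ν - 1 / 2)))
          = ∑' m : ℤ, fK (-Real.log q * ((m : ℝ) - (ν - 1/2))) :=
        tsum_congr fun m => term_eq q ν hq.1 m
      rw [Teq]
      set T := ∑' m : ℤ, fK (-Real.log q * ((m : ℝ) - (ν - 1/2))) with hT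
      have hne : -Real.log q ≠ 0 := ne_of_gt hh
      have hlog : Real.log q ≠ 0 := fun h0 => hne (by rw [h0, neg_zero])
      have key : (1 - q) * T = (1 - q) / (-Real.log q) * (-Real.log q * T) := by
        field_simp
      rw [key]
      exact mul_le_mul_of_nonneg_left lo (div_nonneg (by linarith [hq.2]) hh.le)
    · filter_upwards [self_mem_nhdsWithin] with q hq
      obtain ⟨_, _, hi⟩ := main_bounds q (ν - 1/2) hq.1 hq.2
      have hh : 0 < -Real.log q := by
        have := Real.log_neg hq.1 hq.2; linarith
      have Teq : (∑' m : ℤ, 1 / (q ^ ((m : ℝ) - ν + 1 / 2) + q ^ (-(m : ℝ) + ν - 1 / 2)))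
          = ∑' m : ℤ, fK (-Real.log q * ((m : ℝ) - (ν - 1/2))) :=
        tsum_congr fun m => term_eq q ν hq.1 m
      rw [Teq]
      set T := ∑' m : ℤ, fK (-Real.log q * ((m : ℝ) - (ν - 1/2))) with hT
      have hne : -Real.log q ≠ 0 := ne_of_gt hh
      have hlog : Real.log q ≠ 0 := fun h0 => hne (by rw [h0, neg_zero])
      have key : (1 - q) * T = (1 - q) / (-Real.log q) * (-Real.log q * T) := by
        field_simp
      rw [key]
      exact mul_le_mul_of_nonneg_left hi (div_nonneg (by linarith [hq.2]) hh.le)
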